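/- For all x in (0, π/4), cos(x) · cosh(x) < 1. -/
import Mathlib

open Real

lemma sinh_lt_mul_cosh {x : ℝ} (hx : 0 < x) : Real.sinh x < x * Real.cosh x := by
  have h : StrictMonoOn (fun y : ℝ => y * Real.cosh y - Real.sinh y) (Set.Ici 0) := by
    apply strictMonoOn_of_deriv_pos (convex_Ici 0)
    · fun_prop
    · intro y hy
      rw [interior_Ici] at hy
      have : deriv (fun y : ℝ => y * Real.cosh y - Real.sinh y) y = y * Real.sinh y := by
        simp [mul_comm]
      rw [this]
      exact mul_pos hy (Real.sinh_pos_iff.mpr hy)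
  have := h (Set.self_mem_Ici) (Set.mem_Ici.mpr hx.le) hx
  simpa using this

theorem stmt_18 (x : ℝ) (hx : x ∈ Set.Ioo 0 (Real.pi / 4)) :
    Real.cos x * Real.cosh x < 1 := by
  obtain ⟨hx0, hx4⟩ := hx
  have hpi : Real.pi / 4 < Real.pi / 2 := by linarith [Real.pi_pos]
  have h : StrictAntiOn (fun y : ℝ => Real.cos y * Real.cosh y) (Set.Icc 0 (Real.pi / 4)) := by
    apply strictAntiOn_of_deriv_neg (convex_Icc 0 (Real.pi / 4))
    · fun_prop
    · intro y hy
      rw [interior_Icc] at hy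
      obtain ⟨hy0, hy4⟩ := hy
      have hd : deriv (fun y : ℝ => Real.cos y * Real.cosh y) y
          = Real.cos y * Real.sinh y - Real.sin y * Real.cosh y := by
        simp
        ring
      rw [hd]
      have hcos : 0 < Real.cos y := Real.cos_pos_of_mem_Ioo ⟨by linarith [Real.pi_pos], by linarith⟩
      have htan : y < Real.tan y := Real.lt_tan hy0 (by linarith)
      have hsin : y * Real.cos y < Real.sin y := by
        rw [Real.tan_eq_sin_div_cos, lt_div_iff₀ hcos] at htan
        linarith
      have h1 : Real.cos y * Real.sinh y < Real.cos y * (y * Real.cosh y) :=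
        (mul_lt_mul_iff_right₀ hcos).mpr (sinh_lt_mul_cosh hy0)
      have h2 : Real.cos y * (y * Real.cosh y) < Real.sin y * Real.cosh y := by
        have := mul_lt_mul_of_pos_right hsin (Real.cosh_pos (x := y))
        nlinarith
      linarith
  have := h (Set.left_mem_Icc.mpr (by linarith)) ⟨hx0.le, hx4.le⟩ hx0
  simpa using this
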